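/- Let n ≥ 1 and let D̃ = (1/(2n−1)!!)·∏_{k=1}^{n} (sin r·(d/dr) + (2k−1)·cos r), the composition taken with smaller values of k to the left (the k = 1 factor applied last). Then for every smooth function f : ℝ → ℂ and every r ∈ ℝ with sin r ≠ 0: D̃ applied to the function s ↦ f″(s) + 2n·(cos s/sin s)·f′(s), evaluated at r, equals (D̃f)″(r) + n²·(D̃f)(r). -/

import Mathlib

/-- The factor `Ã_k` given by `(Ã_k g)(r) = sin r · g'(r) + (2k-1) cos r · g(r)`. -/
noncomputable def Asph (k : ℕ) (g : ℝ → ℂ) : ℝ → ℂ :=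
  fun r => (Real.sin r : ℂ) * deriv g r + (2 * (k : ℂ) - 1) * (Real.cos r : ℂ) * g r

/-- `AsphChain n f = Ã₁(Ã₂(⋯(Ãₙ f)⋯))`, the composition with smaller indices to
the left. -/
noncomputable def AsphChain : ℕ → (ℝ → ℂ) → (ℝ → ℂ)
  | 0, f => f
  | n + 1, f => AsphChain n (Asph (n + 1) f)

/-- The shift operator `D̃ = (1/(2n-1)!!) ∏_{k=1}^n (sin r d/dr + (2k-1) cos r)`. -/
noncomputable def Dsph (n : ℕ) (f : ℝ → ℂ) : ℝ → ℂ :=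
  fun r => ((Nat.doubleFactorial (2 * n - 1) : ℂ))⁻¹ * AsphChain n f r

-- basic smoothness facts
lemma smoothS : ContDiff ℝ (⊤ : ℕ∞) (fun s : ℝ => (Real.sin s : ℂ)) :=
  Complex.ofRealCLM.contDiff.comp Real.contDiff_sin

lemma smoothC : ContDiff ℝ (⊤ : ℕ∞) (fun s : ℝ => (Real.cos s : ℂ)) :=
  Complex.ofRealCLM.contDiff.comp Real.contDiff_cos

lemma hasDerivAt_S (x : ℝ) :
    HasDerivAt (fun s : ℝ => (Real.sin s : ℂ)) ((Real.cos x : ℂ)) x :=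
  HasDerivAt.ofReal_comp (Real.hasDerivAt_sin x)

lemma hasDerivAt_C (x : ℝ) :
    HasDerivAt (fun s : ℝ => (Real.cos s : ℂ)) (-(Real.sin x : ℂ)) x := by
  simpa using HasDerivAt.ofReal_comp (Real.hasDerivAt_cos x)

lemma smooth_deriv {g : ℝ → ℂ} (hg : ContDiff ℝ (⊤ : ℕ∞) g) :
    ContDiff ℝ (⊤ : ℕ∞) (deriv g) := (contDiff_infty_iff_deriv.mp hg).2

lemma hasDerivAt_of_smooth {g : ℝ → ℂ} (hg : ContDiff ℝ (⊤ : ℕ∞) g) (x : ℝ) :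
    HasDerivAt g (deriv g x) x := (hg.differentiable (by simp) x).hasDerivAt

lemma contDiff_Asph (k : ℕ) {g : ℝ → ℂ} (hg : ContDiff ℝ (⊤ : ℕ∞) g) :
    ContDiff ℝ (⊤ : ℕ∞) (Asph k g) :=
  (smoothS.mul (smooth_deriv hg)).add ((contDiff_const.mul smoothC).mul hg)

lemma contDiff_AsphChain (m : ℕ) : ∀ {g : ℝ → ℂ}, ContDiff ℝ (⊤ : ℕ∞) g →
    ContDiff ℝ (⊤ : ℕ∞) (AsphChain m g) := by
  induction m with
  | zero => exact fun h => h
  | succ m ih => exact fun h => ih (contDiff_Asph _ h)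

lemma hasDerivAt_Asph (k : ℕ) {g : ℝ → ℂ} (hg : ContDiff ℝ (⊤ : ℕ∞) g) (x : ℝ) :
    HasDerivAt (Asph k g)
      ((Real.sin x : ℂ) * deriv (deriv g) x + (2 * (k : ℂ)) * (Real.cos x : ℂ) * deriv g x
        - (2 * (k : ℂ) - 1) * (Real.sin x : ℂ) * g x) x := by
  have h1 := (hasDerivAt_S x).mul (hasDerivAt_of_smooth (smooth_deriv hg) x)
  have h2 := (((hasDerivAt_C x).const_mul (2 * (k : ℂ) - 1)).mul (hasDerivAt_of_smooth hg x))
  convert h1.add h2 using 1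
  · rfl
  · rfl
  · ring

lemma deriv_Asph (k : ℕ) {g : ℝ → ℂ} (hg : ContDiff ℝ (⊤ : ℕ∞) g) :
    deriv (Asph k g) = fun x =>
      (Real.sin x : ℂ) * deriv (deriv g) x + (2 * (k : ℂ)) * (Real.cos x : ℂ) * deriv g x
        - (2 * (k : ℂ) - 1) * (Real.sin x : ℂ) * g x := by
  funext x; exact (hasDerivAt_Asph k hg x).deriv

lemma deriv_deriv_Asph (k : ℕ) {g : ℝ → ℂ} (hg : ContDiff ℝ (⊤ : ℕ∞) g) (x : ℝ) :
    deriv (deriv (Asph k g)) x =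
      (Real.sin x : ℂ) * deriv (deriv (deriv g)) x
        + (2 * (k : ℂ) + 1) * (Real.cos x : ℂ) * deriv (deriv g) x
        - (4 * (k : ℂ) - 1) * (Real.sin x : ℂ) * deriv g x
        - (2 * (k : ℂ) - 1) * (Real.cos x : ℂ) * g x := by
  rw [deriv_Asph k hg]
  have h1 := (hasDerivAt_S x).mul (hasDerivAt_of_smooth (smooth_deriv (smooth_deriv hg)) x)
  have h2 := ((hasDerivAt_C x).const_mul (2 * (k : ℂ))).mul
    (hasDerivAt_of_smooth (smooth_deriv hg) x)
  have h3 := ((hasDerivAt_S x).const_mul (2 * (k : ℂ) - 1)).mul (hasDerivAt_of_smooth hg x)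
  have := ((h1.add h2).sub h3).deriv
  refine this.trans ?_
  ring

lemma step (k : ℕ) {g : ℝ → ℂ} (hg : ContDiff ℝ (⊤ : ℕ∞) g) {r : ℝ} (hr : Real.sin r ≠ 0) :
    Asph k (fun s => deriv (deriv g) s
        + 2 * (k : ℂ) * ((Real.cos s : ℂ) / (Real.sin s : ℂ)) * deriv g s) r
      = deriv (deriv (Asph k g)) r
        + 2 * ((k : ℂ) - 1) * ((Real.cos r : ℂ) / (Real.sin r : ℂ)) * deriv (Asph k g) r
        + (2 * (k : ℂ) - 1) * Asph k g r := by
  have hS0 : (Real.sin r : ℂ) ≠ 0 := Complex.ofReal_ne_zero.mpr hr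
  have hpy : (Real.sin r : ℂ) ^ 2 + (Real.cos r : ℂ) ^ 2 = 1 := by
    exact_mod_cast congrArg (fun t : ℝ => (t : ℂ)) (Real.sin_sq_add_cos_sq r)
  -- derivative of the inner function at r
  have hq : HasDerivAt (fun s : ℝ => (Real.cos s : ℂ) / (Real.sin s : ℂ))
      ((-(Real.sin r : ℂ) * (Real.sin r : ℂ) - (Real.cos r : ℂ) * (Real.cos r : ℂ))
        / (Real.sin r : ℂ) ^ 2) r := (hasDerivAt_C r).div (hasDerivAt_S r) hS0
  have hL : HasDerivAt (fun s => deriv (deriv g) s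
        + 2 * (k : ℂ) * ((Real.cos s : ℂ) / (Real.sin s : ℂ)) * deriv g s)
      (deriv (deriv (deriv g)) r
        + (2 * (k : ℂ) * ((-(Real.sin r : ℂ) * (Real.sin r : ℂ)
            - (Real.cos r : ℂ) * (Real.cos r : ℂ)) / (Real.sin r : ℂ) ^ 2) * deriv g r
          + 2 * (k : ℂ) * ((Real.cos r : ℂ) / (Real.sin r : ℂ)) * deriv (deriv g) r)) r := by
    exact (hasDerivAt_of_smooth (smooth_deriv (smooth_deriv hg)) r).add
      ((hq.const_mul (2 * (k : ℂ))).mul (hasDerivAt_of_smooth (smooth_deriv hg) r))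
  simp only [Asph]
  rw [hL.deriv, deriv_deriv_Asph k hg, deriv_Asph k hg]
  set a : ℂ := (Real.sin r : ℂ) with ha
  set b : ℂ := (Real.cos r : ℂ) with hb
  clear_value a b
  field_simp
  rw [← ha, ← hb]
  ring

def Usin : Set ℝ := {s | Real.sin s ≠ 0}

lemma isOpen_Usin : IsOpen Usin :=
  isOpen_compl_singleton.preimage Real.continuous_sin

lemma Asph_congr (k : ℕ) {u v : ℝ → ℂ} {r : ℝ} (h : u =ᶠ[nhds r] v) :
    Asph k u =ᶠ[nhds r] Asph k v := by
  filter_upwards [h, h.deriv] with x hx hdx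
  simp only [Asph, hx, hdx]

lemma AsphChain_congr (m : ℕ) : ∀ {u v : ℝ → ℂ} {r : ℝ}, u =ᶠ[nhds r] v →
    AsphChain m u =ᶠ[nhds r] AsphChain m v := by
  induction m with
  | zero => exact fun h => h
  | succ m ih => exact fun h => ih (Asph_congr _ h)

lemma Asph_const_mul (k : ℕ) (c : ℂ) (u : ℝ → ℂ) :
    Asph k (fun s => c * u s) = fun s => c * Asph k u s := by
  funext x
  simp only [Asph, deriv_const_mul_field']
  ring

lemma AsphChain_const_mul (m : ℕ) (c : ℂ) : ∀ u : ℝ → ℂ,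
    AsphChain m (fun s => c * u s) = fun s => c * AsphChain m u s := by
  induction m with
  | zero => intro u; rfl
  | succ m ih =>
      intro u
      show AsphChain m (Asph (m + 1) fun s => c * u s) = _
      rw [Asph_const_mul, ih]
      rfl

lemma contDiffOn_deriv_Usin {u : ℝ → ℂ} (hu : ContDiffOn ℝ (⊤ : ℕ∞) u Usin) :
    ContDiffOn ℝ (⊤ : ℕ∞) (deriv u) Usin :=
  hu.deriv_of_isOpen isOpen_Usin (by exact_mod_cast le_top)

lemma contDiffOn_Asph (k : ℕ) {u : ℝ → ℂ} (hu : ContDiffOn ℝ (⊤ : ℕ∞) u Usin) :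
    ContDiffOn ℝ (⊤ : ℕ∞) (Asph k u) Usin :=
  (smoothS.contDiffOn.mul (contDiffOn_deriv_Usin hu)).add
    ((contDiff_const.contDiffOn.mul smoothC.contDiffOn).mul hu)

lemma Asph_add_eqOn (k : ℕ) {u v : ℝ → ℂ} (hu : ContDiffOn ℝ (⊤ : ℕ∞) u Usin)
    (hv : ContDiffOn ℝ (⊤ : ℕ∞) v Usin) {x : ℝ} (hx : x ∈ Usin) :
    Asph k (fun s => u s + v s) x = Asph k u x + Asph k v x := by
  have hux : DifferentiableAt ℝ u x :=
    (hu.contDiffAt (isOpen_Usin.mem_nhds hx)).differentiableAt (by simp)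
  have hvx : DifferentiableAt ℝ v x :=
    (hv.contDiffAt (isOpen_Usin.mem_nhds hx)).differentiableAt (by simp)
  simp only [Asph, deriv_fun_add hux hvx]
  ring

lemma AsphChain_add (m : ℕ) : ∀ {u v : ℝ → ℂ}, ContDiffOn ℝ (⊤ : ℕ∞) u Usin →
    ContDiffOn ℝ (⊤ : ℕ∞) v Usin → ∀ {r : ℝ}, r ∈ Usin →
    AsphChain m (fun s => u s + v s) r = AsphChain m u r + AsphChain m v r := by
  induction m with
  | zero => intro u v _ _ r _; rfl
  | succ m ih =>
      intro u v hu hv r hr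
      have h1 : Asph (m + 1) (fun s => u s + v s) =ᶠ[nhds r]
          fun s => Asph (m + 1) u s + Asph (m + 1) v s := by
        filter_upwards [isOpen_Usin.eventually_mem hr] with x hx
        exact Asph_add_eqOn (m + 1) hu hv hx
      show AsphChain m (Asph (m + 1) fun s => u s + v s) r = _
      rw [(AsphChain_congr m h1).self_of_nhds]
      exact ih (contDiffOn_Asph _ hu) (contDiffOn_Asph _ hv) hr

lemma key (m : ℕ) : ∀ (g : ℝ → ℂ), ContDiff ℝ (⊤ : ℕ∞) g → ∀ (r : ℝ), Real.sin r ≠ 0 →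
    AsphChain m (fun s => deriv (deriv g) s
        + 2 * (m : ℂ) * ((Real.cos s : ℂ) / (Real.sin s : ℂ)) * deriv g s) r
      = deriv (deriv (AsphChain m g)) r + (m : ℂ) ^ 2 * AsphChain m g r := by
  induction m with
  | zero =>
      intro g hg r hr
      simp [AsphChain]
  | succ m ih =>
      intro g hg r hr
      have hrU : r ∈ Usin := hr
      have hh : ContDiff ℝ (⊤ : ℕ∞) (Asph (m + 1) g) := contDiff_Asph (m + 1) hg
      set h : ℝ → ℂ := Asph (m + 1) g with hhdef
      -- the function after one application of Asph (m+1), rewritten via `step`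
      have h1 : Asph (m + 1) (fun s => deriv (deriv g) s
            + 2 * ((m + 1 : ℕ) : ℂ) * ((Real.cos s : ℂ) / (Real.sin s : ℂ)) * deriv g s)
          =ᶠ[nhds r] fun s =>
            (deriv (deriv h) s + 2 * (m : ℂ) * ((Real.cos s : ℂ) / (Real.sin s : ℂ)) * deriv h s)
            + (2 * ((m + 1 : ℕ) : ℂ) - 1) * h s := by
        filter_upwards [isOpen_Usin.eventually_mem hrU] with x hx
        have hst := step (m + 1) hg (show Real.sin x ≠ 0 from hx)
        rw [hst]
        push_cast
        ring
      have hu : ContDiffOn ℝ (⊤ : ℕ∞) (fun s => deriv (deriv h) s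
          + 2 * (m : ℂ) * ((Real.cos s : ℂ) / (Real.sin s : ℂ)) * deriv h s) Usin := by
        have hcot : ContDiffOn ℝ (⊤ : ℕ∞) (fun s : ℝ => (Real.cos s : ℂ) / (Real.sin s : ℂ))
            Usin := by
          have hinv : ContDiffOn ℝ (⊤ : ℕ∞) (fun s : ℝ => ((Real.sin s : ℂ))⁻¹) Usin :=
            smoothS.contDiffOn.inv (fun x hx => Complex.ofReal_ne_zero.mpr hx)
          have := smoothC.contDiffOn.mul hinv
          refine this.congr fun x _ => ?_
          rw [div_eq_mul_inv]
        exact ((smooth_deriv (smooth_deriv hh)).contDiffOn).add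
          ((contDiff_const.contDiffOn.mul hcot).mul ((smooth_deriv hh).contDiffOn))
      have hv : ContDiffOn ℝ (⊤ : ℕ∞) (fun s => (2 * ((m + 1 : ℕ) : ℂ) - 1) * h s) Usin :=
        (contDiff_const.mul hh).contDiffOn
      show AsphChain m (Asph (m + 1) fun s => deriv (deriv g) s
          + 2 * ((m + 1 : ℕ) : ℂ) * ((Real.cos s : ℂ) / (Real.sin s : ℂ)) * deriv g s) r = _
      rw [(AsphChain_congr m h1).self_of_nhds, AsphChain_add m hu hv hrU,
        AsphChain_const_mul m (2 * ((m + 1 : ℕ) : ℂ) - 1) h, ih h hh r hr]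
      show deriv (deriv (AsphChain m h)) r + (m : ℂ) ^ 2 * AsphChain m h r
          + (2 * ((m + 1 : ℕ) : ℂ) - 1) * AsphChain m h r
        = deriv (deriv (AsphChain (m + 1) g)) r + ((m + 1 : ℕ) : ℂ) ^ 2 * AsphChain (m + 1) g r
      have : AsphChain (m + 1) g = AsphChain m h := rfl
      rw [this]
      push_cast
      ring

/-- Intertwining property of `D̃` with the radial spherical Laplacian on
`S^{2n+1}`. -/
theorem stmt_3 (n : ℕ) (hn : 1 ≤ n) (f : ℝ → ℂ) (hf : ContDiff ℝ (⊤ : ℕ∞) f)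
    (r : ℝ) (hr : Real.sin r ≠ 0) :
    Dsph n (fun s => deriv (deriv f) s
        + 2 * (n : ℂ) * ((Real.cos s : ℂ) / (Real.sin s : ℂ)) * deriv f s) r
      = deriv (deriv (Dsph n f)) r + (n : ℂ) ^ 2 * Dsph n f r := by
  unfold Dsph
  rw [deriv_const_mul_field', deriv_const_mul_field', key n f hf r hr]
  ring
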